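/- Let T be a countably branching well-founded tree with associated tree of initial segments T̃. Let (μ_i) be a bounded and disjointly supported sequence in M_+(T̃) such that μ = w*-lim_i μ_i exists and such that for every t̃ ∈ T̃ the limit ν({t̃}) = lim_i μ_i(S(t̃)) exists. Then for every non-maximal t̃ ∈ T̃ and every enumeration (t̃_j)_{j∈ℕ} of S(t̃), the iterated limit lim_j lim_i μ_i(∪_{k≥j}(V_{t̃_k} \ {t̃_k})) exists and μ({t̃}) = ν({t̃}) + lim_j lim_i μ_i(∪_{k≥j}(V_{t̃_k} \ {t̃_k})). In particular, μ({t̃}) = ν({t̃}) if and only if this double limit is zero. -/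

import Mathlib

/-- A countably branching well-founded tree `T = (M, ≼)` on an infinite subset `M` of `ℕ`:
`≼` is a partial order on `M` compatible with the usual order, predecessor sets are finite
chains, there is no infinite totally ordered subset, and every non-maximal node has
(countably) infinitely many immediate successors. -/
structure NatTree where
  M : Set ℕ
  infinite : M.Infinite
  r : ℕ → ℕ → Prop
  mem_left : ∀ {a b : ℕ}, r a b → a ∈ M
  mem_right : ∀ {a b : ℕ}, r a b → b ∈ M
  refl : ∀ a ∈ M, r a a
  antisymm : ∀ {a b : ℕ}, r a b → r b a → a = b
  trans : ∀ {a b c : ℕ}, r a b → r b c → r a c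
  compat : ∀ {a b : ℕ}, r a b → a ≤ b
  pred_finite : ∀ a ∈ M, {b : ℕ | r b a}.Finite
  pred_chain : ∀ a ∈ M, ∀ {b c : ℕ}, r b a → r c a → r b c ∨ r c b
  wellFounded : ∀ C : Set ℕ, C ⊆ M → (∀ a ∈ C, ∀ b ∈ C, r a b ∨ r b a) → C.Finite
  branching : ∀ a ∈ M, (∃ b, b ≠ a ∧ r a b) →
    {b : ℕ | r a b ∧ b ≠ a ∧ ∀ c, r a c → r c b → c = a ∨ c = b}.Infinite

/-- A bounded positive (countably additive) measure defined on all subsets of `α`. -/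
structure PosMeasure (α : Type*) where
  m : Set α → ℝ
  nonneg : ∀ A, 0 ≤ m A
  empty : m ∅ = 0
  cadd : ∀ A : ℕ → Set α, (Pairwise fun i j => Disjoint (A i) (A j)) →
    HasSum (fun i => m (A i)) (m (⋃ i, A i))

/-- The support of a positive measure: the set of atoms of positive mass. -/
def suppM (μ : PosMeasure ℕ) : Set ℕ := {t | 0 < μ.m {t}}

/-- `V_t = {s : t ≼ s}`, the nodes above `t`. -/
def V (T : NatTree) (t : ℕ) : Set ℕ := {s | T.r t s}

/-- `S(t)`: the set of immediate successors of a node `t`. -/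
def Succ (T : NatTree) (t : ℕ) : Set ℕ :=
  {s | T.r t s ∧ s ≠ t ∧ ∀ c, T.r t c → T.r c s → c = t ∨ c = s}

namespace PosMeasure
variable {α : Type*} (p : PosMeasure α)

theorem add (A B : Set α) (h : Disjoint A B) : p.m (A ∪ B) = p.m A + p.m B := by
  classical
  set F : ℕ → Set α := fun n => if n = 0 then A else if n = 1 then B else ∅ with hF
  have hdisj : Pairwise fun i j => Disjoint (F i) (F j) := by
    intro i j hij
    simp only [F]
    split_ifs <;> first | omega | exact h | exact h.symm | simp
  have hs := p.cadd F hdisj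
  have hU : ⋃ i, F i = A ∪ B := by
    ext x
    simp only [Set.mem_iUnion, Set.mem_union, F]
    constructor
    · rintro ⟨i, hi⟩
      split_ifs at hi with h0 h1
      exacts [Or.inl hi, Or.inr hi, absurd hi (Set.notMem_empty x)]
    · rintro (hx | hx)
      exacts [⟨0, by simp [hx]⟩, ⟨1, by simp [hx]⟩]
  have hs2 : HasSum (fun i => p.m (F i)) (p.m A + p.m B) := by
    have h0 : ∀ b ∉ ({0, 1} : Finset ℕ), p.m (F b) = 0 := by
      intro b hb
      simp only [Finset.mem_insert, Finset.mem_singleton] at hb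
      push_neg at hb
      simp [F, hb.1, hb.2, p.empty]
    have := hasSum_sum_of_ne_finset_zero (L := SummationFilter.unconditional ℕ) h0
    rwa [Finset.sum_pair (by norm_num : (0:ℕ) ≠ 1), show p.m (F 0) = p.m A by simp [F],
      show p.m (F 1) = p.m B by simp [F]] at this
  rw [hU] at hs
  exact hs.unique hs2

theorem mono {A B : Set α} (h : A ⊆ B) : p.m A ≤ p.m B := by
  have hB : B = A ∪ (B \ A) := by rw [Set.union_diff_cancel h]
  have := p.add A (B \ A) Set.disjoint_sdiff_right
  rw [← hB] at this
  linarith [p.nonneg (B \ A)]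

theorem diff_eq {A B : Set α} (h : A ⊆ B) : p.m (B \ A) = p.m B - p.m A := by
  have hB : B = A ∪ (B \ A) := by rw [Set.union_diff_cancel h]
  have := p.add A (B \ A) Set.disjoint_sdiff_right
  rw [← hB] at this
  linarith

end PosMeasure

theorem exists_imm_succ (T : NatTree) {t b : ℕ} (hb : T.r t b) (hne : b ≠ t) :
    ∃ s ∈ Succ T t, T.r s b := by
  have hbM : b ∈ T.M := T.mem_right hb
  have hfin : {c : ℕ | T.r c b}.Finite := T.pred_finite b hbM
  set C : Set ℕ := {c | T.r t c ∧ T.r c b ∧ c ≠ t} with hC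
  have hCfin : C.Finite := hfin.subset (fun c hc => hc.2.1)
  have hCne : C.Nonempty := ⟨b, hb, T.refl b hbM, hne⟩
  obtain ⟨s, hsC, hsmin⟩ := Set.exists_min_image C id hCfin hCne
  have hleast : ∀ c ∈ C, T.r s c := by
    intro c hc
    rcases T.pred_chain b hbM hsC.2.1 hc.2.1 with h | h
    · exact h
    · have h3 : c = s := le_antisymm (T.compat h) (hsmin c hc)
      subst h3
      exact T.refl c (T.mem_left h)
  refine ⟨s, ⟨hsC.1, hsC.2.2, ?_⟩, hsC.2.1⟩
  intro c htc hcs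
  by_cases hct : c = t
  · exact Or.inl hct
  · have hcC : c ∈ C := ⟨htc, T.trans hcs hsC.2.1, hct⟩
    exact Or.inr (T.antisymm hcs (hleast c hcC))

theorem V_disjoint (T : NatTree) {t s1 s2 : ℕ} (h1 : s1 ∈ Succ T t) (h2 : s2 ∈ Succ T t)
    (hne : s1 ≠ s2) : Disjoint (V T s1) (V T s2) := by
  rw [Set.disjoint_left]
  intro b hb1 hb2
  have hbM : b ∈ T.M := T.mem_right hb1
  rcases T.pred_chain b hbM hb1 hb2 with h | h
  · rcases h2.2.2 s1 h1.1 h with h' | h'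
    · exact h1.2.1 h'
    · exact hne h'
  · rcases h1.2.2 s2 h2.1 h with h' | h'
    · exact h2.2.1 h'
    · exact hne h'.symm


/-- if `(μ_i)` is bounded and disjointly supported, `μ = w*-lim μ_i` exists
and `ν({t}) = lim_i μ_i(S(t))` exists for every node `t`, then for every non-maximal node
`t` and every enumeration `(t_j)_j` of `S(t)` the iterated limit
`lim_j lim_i μ_i(⋃_{k ≥ j} (V_{t_k} \ {t_k}))` exists and
`μ({t}) = ν({t}) + lim_j lim_i μ_i(⋃_{k ≥ j}(V_{t_k} \ {t_k}))`; in particular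
`μ({t}) = ν({t})` iff this double limit is zero. -/
theorem stmt_10 (T : NatTree) (μseq : ℕ → PosMeasure ℕ) (μ : PosMeasure ℕ) (ν : ℕ → ℝ)
    (hsupp : ∀ i, suppM (μseq i) ⊆ T.M)
    (hdisj : ∀ i j : ℕ, i ≠ j → Disjoint (suppM (μseq i)) (suppM (μseq j)))
    (hbdd : ∃ B : ℝ, ∀ i, (μseq i).m Set.univ ≤ B)
    (hw : ∀ t ∈ T.M,
      Filter.Tendsto (fun i => (μseq i).m (V T t)) Filter.atTop (nhds (μ.m (V T t))))
    (hν : ∀ t ∈ T.M,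
      Filter.Tendsto (fun i => (μseq i).m (Succ T t)) Filter.atTop (nhds (ν t)))
    (t : ℕ) (ht : t ∈ T.M) (htnm : ∃ s, s ≠ t ∧ T.r t s)
    (e : ℕ → ℕ) (he1 : ∀ k, e k ∈ Succ T t) (he2 : Function.Injective e)
    (he3 : ∀ s ∈ Succ T t, ∃ k, e k = s) :
    ∃ (L : ℕ → ℝ) (c : ℝ),
      (∀ j : ℕ, Filter.Tendsto
        (fun i => (μseq i).m (⋃ (k : ℕ) (_ : j ≤ k), (V T (e k) \ {e k})))
        Filter.atTop (nhds (L j))) ∧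
      Filter.Tendsto L Filter.atTop (nhds c) ∧
      μ.m {t} = ν t + c ∧
      (μ.m {t} = ν t ↔ c = 0) := by
  classical
  have heS : ∀ k, T.r t (e k) := fun k => (he1 k).1
  have hene : ∀ k, e k ≠ t := fun k => (he1 k).2.1
  have heM : ∀ k, e k ∈ T.M := fun k => T.mem_right (heS k)
  have hD : Pairwise fun k l => Disjoint (V T (e k)) (V T (e l)) :=
    fun k l hkl => V_disjoint T (he1 k) (he1 l) (fun h => hkl (he2 h))
  have hWD : Pairwise fun k l => Disjoint (V T (e k) \ {e k}) (V T (e l) \ {e l}) :=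
    fun k l hkl => (hD hkl).mono Set.diff_subset Set.diff_subset
  have hsubE : ∀ k, ({e k} : Set ℕ) ⊆ V T (e k) :=
    fun k => Set.singleton_subset_iff.2 (T.refl (e k) (heM k))
  have htsub : ({t} : Set ℕ) ⊆ V T t := Set.singleton_subset_iff.2 (T.refl t ht)
  have htnot : ∀ k, t ∉ V T (e k) := by
    intro k hk
    exact hene k (T.antisymm hk (heS k))
  have hVt : V T t \ {t} = ⋃ k, V T (e k) := by
    ext b
    simp only [Set.mem_diff, Set.mem_singleton_iff, Set.mem_iUnion]
    constructor
    · rintro ⟨hb, hbt⟩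
      obtain ⟨s, hs, hsb⟩ := exists_imm_succ T hb hbt
      obtain ⟨k, rfl⟩ := he3 s hs
      exact ⟨k, hsb⟩
    · rintro ⟨k, hk⟩
      refine ⟨T.trans (heS k) hk, ?_⟩
      rintro rfl
      exact htnot k hk
  have hSucc : Succ T t = ⋃ k, ({e k} : Set ℕ) := by
    ext s
    simp only [Set.mem_iUnion, Set.mem_singleton_iff]
    constructor
    · intro hs
      obtain ⟨k, hk⟩ := he3 s hs
      exact ⟨k, hk.symm⟩
    · rintro ⟨k, rfl⟩
      exact he1 k
  have hdecomp : V T t \ {t} = Succ T t ∪ ⋃ k, (V T (e k) \ {e k}) := by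
    rw [hVt, hSucc, ← Set.iUnion_union_distrib]
    exact Set.iUnion_congr fun k => (Set.union_diff_cancel (hsubE k)).symm
  have hdisjSU : Disjoint (Succ T t) (⋃ k, (V T (e k) \ {e k})) := by
    rw [Set.disjoint_left]
    intro x hx hx2
    simp only [Set.mem_iUnion, Set.mem_diff, Set.mem_singleton_iff] at hx2
    obtain ⟨k, hk1, hk2⟩ := hx2
    rcases hx.2.2 (e k) (heS k) hk1 with h | h
    · exact hene k h
    · exact hk2 h.symm
  have hUeq : ∀ j : ℕ, (⋃ (k : ℕ) (_ : j ≤ k), (V T (e k) \ {e k}))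
      = ⋃ n, (V T (e (n + j)) \ {e (n + j)}) := by
    intro j
    ext b
    simp only [Set.mem_iUnion]
    constructor
    · rintro ⟨k, hk, hb⟩
      exact ⟨k - j, by rwa [Nat.sub_add_cancel hk]⟩
    · rintro ⟨n, hb⟩
      exact ⟨n + j, Nat.le_add_left j n, hb⟩
  have key : ∀ (p : PosMeasure ℕ) (j : ℕ),
      p.m (⋃ (k : ℕ) (_ : j ≤ k), (V T (e k) \ {e k})) =
      p.m (V T t) - p.m {t} - p.m (Succ T t)
        - ∑ k ∈ Finset.range j, (p.m (V T (e k)) - p.m {e k}) := by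
    intro p j
    have hsumW : HasSum (fun k => p.m (V T (e k) \ {e k}))
        (p.m (⋃ k, (V T (e k) \ {e k}))) := p.cadd _ hWD
    have hU0 : p.m (⋃ k, (V T (e k) \ {e k}))
        = p.m (V T t) - p.m {t} - p.m (Succ T t) := by
      have h1 : p.m (V T t \ {t}) = p.m (V T t) - p.m {t} := p.diff_eq htsub
      have h2 := p.add (Succ T t) (⋃ k, (V T (e k) \ {e k})) hdisjSU
      rw [← hdecomp] at h2
      linarith
    have h1 : HasSum (fun n => p.m (V T (e (n + j)) \ {e (n + j)}))
        (p.m (⋃ k, (V T (e k) \ {e k}))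
          - ∑ i ∈ Finset.range j, p.m (V T (e i) \ {e i})) := by
      exact (hasSum_nat_add_iff (f := fun k => p.m (V T (e k) \ {e k})) j).2
        (by simpa using hsumW)
    have h2 : HasSum (fun n => p.m (V T (e (n + j)) \ {e (n + j)}))
        (p.m (⋃ n, (V T (e (n + j)) \ {e (n + j)}))) :=
      p.cadd (fun n => V T (e (n + j)) \ {e (n + j)}) (fun a b hab => hWD (by omega))
    have h3 := h2.unique h1
    rw [hUeq j, h3, hU0]
    congr 1
    exact Finset.sum_congr rfl fun k _ => p.diff_eq (hsubE k)
  have hatom : ∀ x : ℕ, Filter.Tendsto (fun i => (μseq i).m {x}) Filter.atTop (nhds 0) := by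
    intro x
    have hev : ∀ᶠ i in Filter.atTop, (μseq i).m {x} = 0 := by
      by_cases h : ∃ i0, 0 < (μseq i0).m {x}
      · obtain ⟨i0, hi0⟩ := h
        filter_upwards [Filter.eventually_ge_atTop (i0 + 1)] with i hi
        by_contra hc
        have hpos : 0 < (μseq i).m {x} := lt_of_le_of_ne ((μseq i).nonneg _) (Ne.symm hc)
        have hne : i ≠ i0 := by omega
        exact Set.disjoint_left.1 (hdisj i i0 hne) hpos hi0
      · push_neg at h
        exact Filter.Eventually.of_forall fun i => le_antisymm (h i) ((μseq i).nonneg _)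
    exact Filter.Tendsto.congr' (Filter.EventuallyEq.symm hev) tendsto_const_nhds
  refine ⟨fun j => μ.m (V T t) - ν t - ∑ k ∈ Finset.range j, μ.m (V T (e k)),
    μ.m {t} - ν t, ?_, ?_, by ring, ?_⟩
  · intro j
    have heq : (fun i => (μseq i).m (⋃ (k : ℕ) (_ : j ≤ k), (V T (e k) \ {e k}))) =
        fun i => (μseq i).m (V T t) - (μseq i).m {t} - (μseq i).m (Succ T t)
          - ∑ k ∈ Finset.range j, ((μseq i).m (V T (e k)) - (μseq i).m {e k}) :=
      funext fun i => key (μseq i) j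
    rw [heq]
    have hlim : Filter.Tendsto (fun i => (μseq i).m (V T t) - (μseq i).m {t}
          - (μseq i).m (Succ T t)
          - ∑ k ∈ Finset.range j, ((μseq i).m (V T (e k)) - (μseq i).m {e k}))
        Filter.atTop (nhds (μ.m (V T t) - 0 - ν t
          - ∑ k ∈ Finset.range j, (μ.m (V T (e k)) - 0))) :=
      (((hw t ht).sub (hatom t)).sub (hν t ht)).sub
        (tendsto_finset_sum _ fun k _ => (hw (e k) (heM k)).sub (hatom (e k)))
    simpa using hlim
  · have hsum : HasSum (fun k => μ.m (V T (e k))) (μ.m (V T t) - μ.m {t}) := by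
      have hc := μ.cadd (fun k => V T (e k)) hD
      rw [← hVt] at hc
      rwa [μ.diff_eq htsub] at hc
    have h2 := hsum.tendsto_sum_nat.const_sub (μ.m (V T t) - ν t)
    have h3 : μ.m (V T t) - ν t - (μ.m (V T t) - μ.m {t}) = μ.m {t} - ν t := by ring
    rw [h3] at h2
    exact h2
  · constructor <;> intro h <;> linarith
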